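/- For n ≥ 5, there is no random variable R such that the average mixing matrix of the complete graph K_n equals (1/n)J. -/

import Mathlib

open Matrix MeasureTheory
open scoped Matrix

/-- The all-ones matrix. -/
def allOnes (n : ℕ) : Matrix (Fin n) (Fin n) ℝ := Matrix.of fun _ _ => 1

/-- for `n ≥ 5`, there is no random variable `R` (modelled by its
distribution, a probability measure `μ` on `ℝ`) such that the average mixing matrix of
the complete graph `K_n`, namely
`M̂_R = E₀∘E₀ + E₁∘E₁ + 2 E[cos (n R)] • (E₀∘E₁)` with `E₀ = (1/n) J`, `E₁ = I - E₀`,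
equals `(1/n) J`. -/
theorem no_uniform_average_mixing_completeGraph {n : ℕ} (hn : 5 ≤ n) :
    ¬ ∃ μ : Measure ℝ, IsProbabilityMeasure μ ∧
      ((1 / n : ℝ) • allOnes n) ⊙ ((1 / n : ℝ) • allOnes n) +
          (1 - (1 / n : ℝ) • allOnes n) ⊙ (1 - (1 / n : ℝ) • allOnes n) +
          (2 * ∫ t, Real.cos (n * t) ∂μ) •
            (((1 / n : ℝ) • allOnes n) ⊙ (1 - (1 / n : ℝ) • allOnes n)) =
        (1 / n : ℝ) • allOnes n := by
  rintro ⟨μ, hμ, heq⟩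
  set c : ℝ := ∫ t, Real.cos (n * t) ∂μ with hc
  have hn5 : (5 : ℝ) ≤ n := by exact_mod_cast hn
  have hn0 : (n : ℝ) ≠ 0 := by linarith
  have hcle : |c| ≤ 1 := by
    have h := norm_integral_le_of_norm_le_const (μ := μ)
      (f := fun t => Real.cos (n * t)) (C := 1)
      (Filter.Eventually.of_forall fun t => by
        simpa using Real.abs_cos_le_one ((n : ℝ) * t))
    simpa [hμ.measure_univ] using h
  have hcl : -1 ≤ c := neg_le_of_abs_le hcle
  have hi : 0 < n := by omega
  have hj : 1 < n := by omega
  set i : Fin n := ⟨0, hi⟩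
  set j : Fin n := ⟨1, hj⟩
  have h01 : i ≠ j := by simp [i, j, Fin.ext_iff]
  have key := congrFun (congrFun heq i) j
  simp only [Matrix.add_apply, Matrix.hadamard_apply, Matrix.smul_apply, Matrix.sub_apply,
    Matrix.one_apply, h01, if_neg, allOnes, Matrix.of_apply, smul_eq_mul, mul_one] at key
  have key' : (1 / n : ℝ) * (1 / n) + (0 - 1 / n) * (0 - 1 / n)
      + 2 * c * (1 / n * (0 - 1 / n)) = 1 / n := by
    simpa [h01] using key
  field_simp at key'
  nlinarith [hcl, hn5]
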